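/- arXiv:2105.05905 — 4 statements merged into one kernel-verified Lean document; each statement's English description precedes it below -/
import Mathlib

section
/- Let φ : ℤ → GL(2,ℤ) be a homomorphism with A = φ(1) parabolic, and let Γ = ℤ² ⋊_φ ℤ. Then Γ contains no subgroup isomorphic to ℤ³. -/
open Matrix

/-- `GL(2,ℤ)`. -/
abbrev GL2Z := Matrix.GeneralLinearGroup (Fin 2) ℤ

/-- `A ∈ GL(2,ℤ)` is parabolic if it is conjugate in `GL(2,ℤ)` to `[[1,s],[0,1]]` with `s ≠ 0`. -/
def IsParabolic (A : GL2Z) : Prop :=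
  ∃ (P : GL2Z) (s : ℤ), s ≠ 0 ∧
    ((P * A * P⁻¹ : GL2Z) : Matrix (Fin 2) (Fin 2) ℤ) = !![1, s; 0, 1]

/-- The group `ℤ²`, written multiplicatively. -/
abbrev Z2 := Multiplicative (Fin 2 → ℤ)

/-- The automorphism of `ℤ²` induced by `A ∈ GL(2,ℤ)` (action by `Matrix.mulVec`). -/
def glAut (A : GL2Z) : MulAut Z2 where
  toFun v := Multiplicative.ofAdd ((A : Matrix (Fin 2) (Fin 2) ℤ).mulVec v.toAdd)
  invFun v := Multiplicative.ofAdd (((A⁻¹ : GL2Z) : Matrix (Fin 2) (Fin 2) ℤ).mulVec v.toAdd)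
  left_inv v := by
    simp only [toAdd_ofAdd, Matrix.mulVec_mulVec, Units.inv_mul, Matrix.one_mulVec, ofAdd_toAdd]
  right_inv v := by
    simp only [toAdd_ofAdd, Matrix.mulVec_mulVec, Units.mul_inv, Matrix.one_mulVec, ofAdd_toAdd]
  map_mul' x y := by simp only [Matrix.mulVec_add, toAdd_mul, ofAdd_add]

/-- The action homomorphism `GL(2,ℤ) →* Aut(ℤ²)`. -/
def glAutHom : GL2Z →* MulAut Z2 where
  toFun := glAut
  map_one' := by ext v; simp [glAut]
  map_mul' A B := by
    ext v : 1
    simp only [glAut, MulAut.mul_apply, MulEquiv.coe_mk, Equiv.coe_fn_mk, toAdd_ofAdd,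
      Units.val_mul, Matrix.mulVec_mulVec]

/-- Given a homomorphism `φ : ℤ → GL(2,ℤ)`, the semidirect product `Γ = ℤ² ⋊_φ ℤ`. -/
abbrev GammaSD (φ : Multiplicative ℤ →* GL2Z) :=
  SemidirectProduct Z2 (Multiplicative ℤ) (glAutHom.comp φ)

private lemma upow (s : ℤ) (m : ℕ) :
    (!![1, s; 0, 1] : Matrix (Fin 2) (Fin 2) ℤ) ^ m = !![1, (m : ℤ) * s; 0, 1] := by
  induction m with
  | zero => simp [Matrix.one_fin_two]
  | succ k ih =>
    rw [pow_succ, ih, Matrix.mul_fin_two]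
    congr 1 <;> push_cast <;> ring

private lemma no_inj (f : (Fin 3 → ℤ) →+ (Fin 2 → ℤ)) : ¬ Function.Injective f := by
  intro h
  have := LinearMap.finrank_le_finrank_of_injective (f := f.toIntLinearMap) h
  simp [Module.finrank_fin_fun] at this

private lemma row_ne (P : GL2Z) :
    ¬((P : Matrix (Fin 2) (Fin 2) ℤ) 1 0 = 0 ∧ (P : Matrix (Fin 2) (Fin 2) ℤ) 1 1 = 0) := by
  rintro ⟨h0, h1⟩
  have hd : IsUnit (P : Matrix (Fin 2) (Fin 2) ℤ).det :=
    (Matrix.isUnit_iff_isUnit_det _).mp P.isUnit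
  rw [Matrix.det_fin_two, h0, h1] at hd
  simp at hd

private lemma solve_zero {a b u0 u1 : ℤ} (h : ¬(a = 0 ∧ b = 0)) (h1 : a * u0 + b * u1 = 0)
    (h2 : b * u0 - a * u1 = 0) : u0 = 0 ∧ u1 = 0 := by
  have hab : a ^ 2 + b ^ 2 ≠ 0 := by
    intro hz
    exact h ⟨by nlinarith [sq_nonneg a, sq_nonneg b], by nlinarith [sq_nonneg a, sq_nonneg b]⟩
  refine ⟨?_, ?_⟩
  · have : (a ^ 2 + b ^ 2) * u0 = 0 := by linear_combination a * h1 + b * h2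
    exact (mul_eq_zero.1 this).resolve_left hab
  · have : (a ^ 2 + b ^ 2) * u1 = 0 := by linear_combination b * h1 - a * h2
    exact (mul_eq_zero.1 this).resolve_left hab

/-- Fixed vectors of nonzero powers of a parabolic matrix satisfy
`(P * w)₁ = 0` where `P` is the conjugating matrix. -/
private lemma parabolic_fixed (A P : GL2Z) (s : ℤ) (hs : s ≠ 0)
    (hP : ((P * A * P⁻¹ : GL2Z) : Matrix (Fin 2) (Fin 2) ℤ) = !![1, s; 0, 1])
    (n : ℤ) (hn : n ≠ 0) (w : Fin 2 → ℤ)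
    (hw : ((A ^ n : GL2Z) : Matrix (Fin 2) (Fin 2) ℤ).mulVec w = w) :
    ((P : Matrix (Fin 2) (Fin 2) ℤ).mulVec w) 1 = 0 := by
  -- reduce to a positive natural power
  set m : ℕ := n.natAbs with hm
  have hmpos : 0 < m := Int.natAbs_pos.mpr hn
  have hw' : ((A ^ m : GL2Z) : Matrix (Fin 2) (Fin 2) ℤ).mulVec w = w := by
    rcases Int.natAbs_eq n with h | h
    · rw [← zpow_natCast A m, ← h]; exact hw
    · have hAm : (A ^ m : GL2Z) = (A ^ n)⁻¹ := by
        have hmn : (m : ℤ) = -n := by rw [hm]; omega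
        rw [← zpow_natCast A m, hmn, _root_.zpow_neg]
      rw [hAm]
      calc (((A ^ n)⁻¹ : GL2Z) : Matrix (Fin 2) (Fin 2) ℤ).mulVec w
          = (((A ^ n)⁻¹ : GL2Z) : Matrix (Fin 2) (Fin 2) ℤ).mulVec
              (((A ^ n : GL2Z) : Matrix (Fin 2) (Fin 2) ℤ).mulVec w) := by rw [hw]
        _ = ((((A ^ n)⁻¹ * A ^ n : GL2Z)) : Matrix (Fin 2) (Fin 2) ℤ).mulVec w := by
            rw [Matrix.mulVec_mulVec, ← Units.val_mul]
        _ = w := by rw [inv_mul_cancel]; simp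
  -- conjugate power
  have hconj : ((P * A ^ m * P⁻¹ : GL2Z) : Matrix (Fin 2) (Fin 2) ℤ)
      = !![1, (m : ℤ) * s; 0, 1] := by
    have : (P * A * P⁻¹ : GL2Z) ^ m = P * A ^ m * P⁻¹ := conj_pow
    rw [← this, Units.val_pow_eq_pow_val, hP, upow]
  set u : Fin 2 → ℤ := (P : Matrix (Fin 2) (Fin 2) ℤ).mulVec w with hu
  have key : (!![1, (m : ℤ) * s; 0, 1] : Matrix (Fin 2) (Fin 2) ℤ).mulVec u = u := by
    rw [← hconj, hu, Matrix.mulVec_mulVec, ← Units.val_mul]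
    have h9 : (P * A ^ m * P⁻¹ * P : GL2Z) = P * A ^ m := by group
    rw [h9, Units.val_mul, ← Matrix.mulVec_mulVec, hw']
  have h0 := congrFun key 0
  simp [Matrix.mulVec, dotProduct, Fin.sum_univ_two] at h0
  rcases h0 with (h' | h') | h'
  · exact absurd h' (by omega)
  · exact absurd h' hs
  · exact h'

/-- If `φ : ℤ → GL(2,ℤ)` is a homomorphism with `A = φ(1)` parabolic, then
`Γ = ℤ² ⋊_φ ℤ` contains no subgroup isomorphic to `ℤ³`. -/
theorem stmt3 (φ : Multiplicative ℤ →* GL2Z)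
    (hA : IsParabolic (φ (Multiplicative.ofAdd 1)))
    (H : Subgroup (GammaSD φ)) :
    ¬ Nonempty (H ≃* Multiplicative (Fin 3 → ℤ)) := by
  rintro ⟨e⟩
  obtain ⟨P, s, hs, hP⟩ := hA
  set A : GL2Z := φ (Multiplicative.ofAdd 1) with hAdef
  set ρ : Multiplicative (Fin 3 → ℤ) →* GammaSD φ :=
    H.subtype.comp e.symm.toMonoidHom with hρ
  have hρinj : Function.Injective ρ := (Subgroup.subtype_injective H).comp e.symm.injective
  set c : (Fin 3 → ℤ) →+ ℤ :=
    MonoidHom.toAdditive ((SemidirectProduct.rightHom).comp ρ) with hc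
  have hright : ∀ x : Fin 3 → ℤ,
      (ρ (Multiplicative.ofAdd x)).right = Multiplicative.ofAdd (c x) := fun x => rfl
  -- φ at ofAdd n is A ^ n
  have hφpow : ∀ n : ℤ, φ (Multiplicative.ofAdd n) = A ^ n := by
    intro n
    have : Multiplicative.ofAdd n = (Multiplicative.ofAdd (1 : ℤ)) ^ n := by
      simp [← ofAdd_zsmul]
    rw [this, map_zpow, hAdef]
  -- core commutation fact
  have hfix : ∀ g z : Fin 3 → ℤ, c z = 0 →
      ((A ^ (c g) : GL2Z) : Matrix (Fin 2) (Fin 2) ℤ).mulVec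
        (Multiplicative.toAdd (ρ (Multiplicative.ofAdd z)).left)
        = Multiplicative.toAdd (ρ (Multiplicative.ofAdd z)).left := by
    intro g z hz
    set γ := ρ (Multiplicative.ofAdd g)
    set κ := ρ (Multiplicative.ofAdd z)
    have hκr : κ.right = 1 := by
      rw [hright, hz]; rfl
    have hcomm : γ * κ = κ * γ := by
      have e1 : γ * κ = ρ (Multiplicative.ofAdd g * Multiplicative.ofAdd z) :=
        (_root_.map_mul ρ _ _).symm
      have e2 : κ * γ = ρ (Multiplicative.ofAdd z * Multiplicative.ofAdd g) :=
        (_root_.map_mul ρ _ _).symm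
      rw [e1, e2, mul_comm (Multiplicative.ofAdd g) (Multiplicative.ofAdd z)]
    have h1 : (γ * κ).left = γ.left * (glAutHom.comp φ) γ.right κ.left :=
      SemidirectProduct.mul_left γ κ
    have h2 : (κ * γ).left = κ.left * γ.left := by
      rw [SemidirectProduct.mul_left, hκr, _root_.map_one]
      simp
    have h3 : γ.left * (glAutHom.comp φ) γ.right κ.left = κ.left * γ.left := by
      rw [← h1, ← h2, hcomm]
    have h4 : (glAutHom.comp φ) γ.right κ.left = κ.left :=
      mul_left_cancel (h3.trans (mul_comm κ.left γ.left))
    have hγr : γ.right = Multiplicative.ofAdd (c g) := hright g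
    rw [hγr] at h4
    have h5 : glAut (φ (Multiplicative.ofAdd (c g))) κ.left = κ.left := h4
    have h6 : Multiplicative.ofAdd
        (((φ (Multiplicative.ofAdd (c g)) : GL2Z) : Matrix (Fin 2) (Fin 2) ℤ).mulVec
          (Multiplicative.toAdd κ.left)) = κ.left := h5
    have h7 := congrArg Multiplicative.toAdd h6
    rw [hφpow] at h7
    exact h7
  -- notation for left parts
  set L : (Fin 3 → ℤ) → (Fin 2 → ℤ) :=
    fun x => Multiplicative.toAdd (ρ (Multiplicative.ofAdd x)).left with hL
  -- additivity of L on the kernel of c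
  have hLadd : ∀ x y : Fin 3 → ℤ, c x = 0 → L (x + y) = L x + L y := by
    intro x y hx
    have : ρ (Multiplicative.ofAdd (x + y))
        = ρ (Multiplicative.ofAdd x) * ρ (Multiplicative.ofAdd y) := by
      rw [show Multiplicative.ofAdd (x + y)
          = Multiplicative.ofAdd x * Multiplicative.ofAdd y from rfl, _root_.map_mul]
    have hxr : (ρ (Multiplicative.ofAdd x)).right = 1 := by rw [hright, hx]; rfl
    have hleft : (ρ (Multiplicative.ofAdd (x + y))).left
        = (ρ (Multiplicative.ofAdd x)).left * (ρ (Multiplicative.ofAdd y)).left := by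
      rw [this, SemidirectProduct.mul_left, hxr, _root_.map_one]
      simp
    simp only [hL]
    rw [hleft]
    rfl
  -- injectivity core: if left and right are trivial then the argument is zero
  have hzero : ∀ x : Fin 3 → ℤ, c x = 0 → L x = 0 → x = 0 := by
    intro x hcx hLx
    have hel : (ρ (Multiplicative.ofAdd x)).left = 1 := by
      have : Multiplicative.toAdd (ρ (Multiplicative.ofAdd x)).left = 0 := hLx
      simpa using congrArg Multiplicative.ofAdd this
    have her : (ρ (Multiplicative.ofAdd x)).right = 1 := by rw [hright, hcx]; rfl
    have : ρ (Multiplicative.ofAdd x) = 1 := by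
      ext <;> simp [hel, her]
    have h8 : ρ (Multiplicative.ofAdd x) = ρ 1 := by rw [this, _root_.map_one]
    simpa using congrArg Multiplicative.toAdd (hρinj h8)
  by_cases hall : ∀ x : Fin 3 → ℤ, c x = 0
  · -- H lives in Z², embed ℤ³ into ℤ²
    set F : (Fin 3 → ℤ) →+ (Fin 2 → ℤ) :=
      AddMonoidHom.mk' L (fun x y => hLadd x y (hall x)) with hF
    refine no_inj F ((injective_iff_map_eq_zero F).mpr ?_)
    intro x hx
    exact hzero x (hall x) hx
  · push_neg at hall
    obtain ⟨g, hg⟩ := hall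
    set n : ℤ := c g with hn
    set q : (Fin 3 → ℤ) → (Fin 3 → ℤ) := fun x => n • x - c x • g with hqdef
    have hq0 : ∀ x, c (q x) = 0 := by
      intro x
      have h1 : c (q x) = c (n • x) - c (c x • g) := map_sub c _ _
      rw [map_zsmul, map_zsmul, smul_eq_mul, smul_eq_mul, ← hn] at h1
      rw [h1]; ring
    have hqadd : ∀ x y, q (x + y) = q x + q y := by
      intro x y
      simp only [hqdef, map_add, add_smul, smul_add]
      abel
    set a : ℤ := (P : Matrix (Fin 2) (Fin 2) ℤ) 1 0 with ha
    set b : ℤ := (P : Matrix (Fin 2) (Fin 2) ℤ) 1 1 with hb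
    have hline : ∀ z : Fin 3 → ℤ, c z = 0 → a * (L z) 0 + b * (L z) 1 = 0 := by
      intro z hz
      have h := parabolic_fixed A P s hs hP n hg (L z) (hfix g z hz)
      simpa [Matrix.mulVec, dotProduct, Fin.sum_univ_two, ha, hb] using h
    set Ffun : (Fin 3 → ℤ) → (Fin 2 → ℤ) :=
      fun x => ![b * L (q x) 0 - a * L (q x) 1, c x] with hFfun
    have hFadd : ∀ x y, Ffun (x + y) = Ffun x + Ffun y := by
      intro x y
      have hLq : L (q (x + y)) = L (q x) + L (q y) := by
        rw [hqadd]; exact hLadd (q x) (q y) (hq0 x)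
      funext i
      fin_cases i <;>
        simp [hFfun, hLq, map_add] <;> ring
    set F : (Fin 3 → ℤ) →+ (Fin 2 → ℤ) := AddMonoidHom.mk' Ffun hFadd with hF
    refine no_inj F ((injective_iff_map_eq_zero F).mpr ?_)
    intro x hx
    have hx0 : b * L (q x) 0 - a * L (q x) 1 = 0 := by
      have := congrFun hx 0
      simpa [hF, hFfun] using this
    have hx1 : c x = 0 := by
      have := congrFun hx 1
      simpa [hF, hFfun] using this
    have hl := hline (q x) (hq0 x)
    obtain ⟨hu0, hu1⟩ := solve_zero (row_ne P) hl hx0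
    have hLq0 : L (q x) = 0 := by
      funext i; fin_cases i
      · exact hu0
      · exact hu1
    have hqx : q x = 0 := hzero (q x) (hq0 x) hLq0
    have : n • x = 0 := by
      have : n • x - c x • g = 0 := hqx
      rwa [hx1, zero_smul, sub_zero] at this
    funext i
    have hi := congrFun this i
    simp only [Pi.smul_apply, smul_eq_mul, Pi.zero_apply] at hi
    exact (mul_eq_zero.1 hi).resolve_left hg
end

section
/- Let G be a group containing a normal infinite cyclic subgroup N such that the quotient G/N is infinite cyclic. Then G contains a finite-index subgroup isomorphic to ℤ × ℤ; that is, G is virtually ℤ². -/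
-- every automorphism of Multiplicative ℤ is an involution
theorem aut_int_sq (e : Multiplicative ℤ ≃* Multiplicative ℤ) (x : Multiplicative ℤ) :
    e (e x) = x := by
  set a : ℤ := Multiplicative.toAdd (e (Multiplicative.ofAdd 1)) with ha
  have key : ∀ m : ℤ, e (Multiplicative.ofAdd m) = Multiplicative.ofAdd (m * a) := by
    intro m
    have : Multiplicative.ofAdd m = (Multiplicative.ofAdd (1:ℤ)) ^ m := by
      simp [← ofAdd_zsmul]
    rw [this, map_zpow, ← ofAdd_toAdd (e (Multiplicative.ofAdd 1)), ← ofAdd_zsmul, ← ha,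
      smul_eq_mul]
  set b : ℤ := Multiplicative.toAdd (e.symm (Multiplicative.ofAdd 1)) with hb
  have key' : ∀ m : ℤ, e.symm (Multiplicative.ofAdd m) = Multiplicative.ofAdd (m * b) := by
    intro m
    have : Multiplicative.ofAdd m = (Multiplicative.ofAdd (1:ℤ)) ^ m := by
      simp [← ofAdd_zsmul]
    rw [this, map_zpow, ← ofAdd_toAdd (e.symm (Multiplicative.ofAdd 1)), ← ofAdd_zsmul, ← hb,
      smul_eq_mul]
  have hab : a * b = 1 := by
    have := e.symm_apply_apply (Multiplicative.ofAdd 1)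
    rw [key, key'] at this
    have := congrArg Multiplicative.toAdd this
    simpa [mul_comm] using this
  have haa : a * a = 1 := by
    have : IsUnit a := IsUnit.of_mul_eq_one b hab
    rcases Int.isUnit_iff.mp this with h | h <;> simp [h]
  calc e (e x) = e (e (Multiplicative.ofAdd (Multiplicative.toAdd x))) := by simp
    _ = Multiplicative.ofAdd (Multiplicative.toAdd x * a * a) := by rw [key, key]
    _ = x := by rw [mul_assoc, haa, mul_one, ofAdd_toAdd]

theorem idx2 : (Subgroup.zpowers (Multiplicative.ofAdd (2:ℤ))).index = 2 := by
  have h : Subgroup.zpowers (Multiplicative.ofAdd (2:ℤ))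
      = AddSubgroup.toSubgroup (AddSubgroup.zmultiples (2:ℤ)) := by
    ext x
    constructor
    · rintro ⟨k, rfl⟩
      show Multiplicative.toAdd ((Multiplicative.ofAdd (2:ℤ)) ^ k) ∈ AddSubgroup.zmultiples (2:ℤ)
      simpa using AddSubgroup.zsmul_mem _ (AddSubgroup.mem_zmultiples (2:ℤ)) k
    · intro hx
      obtain ⟨k, hk⟩ : ∃ k : ℤ, k • (2:ℤ) = Multiplicative.toAdd x := hx
      exact ⟨k, by show Multiplicative.ofAdd (2:ℤ) ^ k = x; rw [← ofAdd_zsmul, hk, ofAdd_toAdd]⟩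
  rw [h, AddSubgroup.index_toSubgroup, Int.index_zmultiples]
  rfl

/-- If a group `G` contains a normal infinite cyclic subgroup `N` such that
the quotient `G/N` is infinite cyclic, then `G` contains a finite-index subgroup
isomorphic to `ℤ × ℤ`; that is, `G` is virtually `ℤ²`. -/
theorem stmt9 {G : Type*} [Group G] (N : Subgroup G) [N.Normal]
    (hN : Nonempty (N ≃* Multiplicative ℤ))
    (hQ : Nonempty ((G ⧸ N) ≃* Multiplicative ℤ)) :
    ∃ H : Subgroup G, H.FiniteIndex ∧ Nonempty (H ≃* Multiplicative (ℤ × ℤ)) := by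
  obtain ⟨ψ⟩ := hN
  obtain ⟨φ⟩ := hQ
  obtain ⟨g, hg⟩ := QuotientGroup.mk'_surjective N (φ.symm (Multiplicative.ofAdd 1))
  have hgφ : φ ((QuotientGroup.mk' N) g) = Multiplicative.ofAdd 1 := by
    rw [hg]; simp
  set K : Subgroup (G ⧸ N) :=
    (Subgroup.zpowers (Multiplicative.ofAdd (2:ℤ))).comap φ.toMonoidHom with hK
  set H : Subgroup G := K.comap (QuotientGroup.mk' N) with hH
  -- index computation
  have hidx : H.index = 2 := by
    rw [hH, Subgroup.index_comap_of_surjective _ (QuotientGroup.mk'_surjective N),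
      hK, Subgroup.index_comap_of_surjective _ φ.surjective, idx2]
  -- commutation of g^2 with N
  have h2 : ∀ n : N, (MulAut.conjNormal g) ((MulAut.conjNormal g) n) = n := by
    intro n
    have := aut_int_sq ((ψ.symm.trans (MulAut.conjNormal g : N ≃* N)).trans ψ) (ψ n)
    simp only [MulEquiv.trans_apply, MulEquiv.symm_apply_apply] at this
    exact ψ.injective this
  have key : ∀ n : N, Commute (n:G) (g^2) := by
    intro n
    have hkey : g * (g * (n:G) * g⁻¹) * g⁻¹ = n := by
      simpa using congrArg Subtype.val (h2 n)
    have h3 : g^2 * (n:G) = n * g^2 := by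
      have h4 : g * g * (n:G) = n * (g * g) := by
        calc g * g * (n:G) = (g * (g * (n:G) * g⁻¹) * g⁻¹) * (g * g) := by group
          _ = n * (g * g) := by rw [hkey]
      rw [pow_two]; exact h4
    exact h3.symm
  have Nab : ∀ a b : N, a * b = b * a := fun a b =>
    ψ.injective (by rw [map_mul, map_mul, mul_comm])
  -- mk of element of N is 1
  have hmkN : ∀ n : N, (QuotientGroup.mk' N) (n:G) = 1 := fun n =>
    (QuotientGroup.eq_one_iff _).mpr n.2
  have hpow : ∀ b : ℤ, φ ((QuotientGroup.mk' N) (g ^ (2*b)))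
      = Multiplicative.ofAdd (2*b) := by
    intro b
    rw [map_zpow, map_zpow, hgφ, ← ofAdd_zsmul, smul_eq_mul, mul_one]
  -- membership
  have hmem : ∀ a b : ℤ, (ψ.symm (Multiplicative.ofAdd a) : G) * g ^ (2*b) ∈ H := by
    intro a b
    simp only [hH, hK, Subgroup.mem_comap, map_mul, hmkN, one_mul, hpow]
    exact ⟨b, by
      show Multiplicative.ofAdd (2:ℤ) ^ b = φ ((QuotientGroup.mk' N) (g ^ (2*b)))
      rw [hpow, ← ofAdd_zsmul, smul_eq_mul, mul_comm]⟩
  -- the homomorphism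
  let f : Multiplicative (ℤ × ℤ) → H := fun p =>
    ⟨(ψ.symm (Multiplicative.ofAdd (Multiplicative.toAdd p).1) : G)
      * g ^ (2 * (Multiplicative.toAdd p).2),
      hmem (Multiplicative.toAdd p).1 (Multiplicative.toAdd p).2⟩
  have hfmul : ∀ p q, f (p * q) = f p * f q := by
    intro p q
    apply Subtype.ext
    show (ψ.symm (Multiplicative.ofAdd ((Multiplicative.toAdd p).1 + (Multiplicative.toAdd q).1)) : G)
        * g ^ (2 * ((Multiplicative.toAdd p).2 + (Multiplicative.toAdd q).2))
      = ((ψ.symm (Multiplicative.ofAdd (Multiplicative.toAdd p).1) : G)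
          * g ^ (2 * (Multiplicative.toAdd p).2))
        * ((ψ.symm (Multiplicative.ofAdd (Multiplicative.toAdd q).1) : G)
          * g ^ (2 * (Multiplicative.toAdd q).2))
    have hcomm : (ψ.symm (Multiplicative.ofAdd (Multiplicative.toAdd q).1) : G)
        * g ^ (2 * (Multiplicative.toAdd p).2)
        = g ^ (2 * (Multiplicative.toAdd p).2)
          * (ψ.symm (Multiplicative.ofAdd (Multiplicative.toAdd q).1) : G) := by
      have := ((key (ψ.symm (Multiplicative.ofAdd (Multiplicative.toAdd q).1))).zpow_right
        ((Multiplicative.toAdd p).2))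
      rw [← zpow_natCast, ← zpow_mul] at this
      simpa [mul_comm] using this.eq
    have hN2 : (ψ.symm (Multiplicative.ofAdd ((Multiplicative.toAdd p).1 + (Multiplicative.toAdd q).1)) : G)
        = (ψ.symm (Multiplicative.ofAdd (Multiplicative.toAdd p).1) : G)
          * (ψ.symm (Multiplicative.ofAdd (Multiplicative.toAdd q).1) : G) := by
      rw [← Subgroup.coe_mul, ← map_mul]
      congr 1
    have hgpow : g ^ (2 * ((Multiplicative.toAdd p).2 + (Multiplicative.toAdd q).2))
        = g ^ (2 * (Multiplicative.toAdd p).2) * g ^ (2 * (Multiplicative.toAdd q).2) := by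
      rw [← zpow_add]; ring_nf
    rw [hN2, hgpow, mul_assoc, ← mul_assoc (ψ.symm (Multiplicative.ofAdd (Multiplicative.toAdd q).1) : G),
      hcomm, mul_assoc, ← mul_assoc]
  let χ : Multiplicative (ℤ × ℤ) →* H := MonoidHom.mk' f hfmul
  have hinj : Function.Injective χ := by
    intro p q hpq
    have h1 : (ψ.symm (Multiplicative.ofAdd (Multiplicative.toAdd p).1) : G)
        * g ^ (2 * (Multiplicative.toAdd p).2)
        = (ψ.symm (Multiplicative.ofAdd (Multiplicative.toAdd q).1) : G)
          * g ^ (2 * (Multiplicative.toAdd q).2) := congrArg Subtype.val hpq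
    -- apply φ ∘ mk
    have h2' : Multiplicative.ofAdd (2 * (Multiplicative.toAdd p).2)
        = Multiplicative.ofAdd (2 * (Multiplicative.toAdd q).2) := by
      have := congrArg (fun x => φ ((QuotientGroup.mk' N) x)) h1
      simpa only [map_mul, hmkN, one_mul, hpow] using this
    have hb : (Multiplicative.toAdd p).2 = (Multiplicative.toAdd q).2 := by
      have h4 : (2:ℤ) * (Multiplicative.toAdd p).2 = 2 * (Multiplicative.toAdd q).2 :=
        congrArg Multiplicative.toAdd h2'
      omega
    have ha : (Multiplicative.toAdd p).1 = (Multiplicative.toAdd q).1 := by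
      rw [hb] at h1
      have := mul_right_cancel h1
      have := ψ.symm.injective (Subtype.ext this)
      simpa using this
    have : Multiplicative.toAdd p = Multiplicative.toAdd q := Prod.ext ha hb
    exact Multiplicative.toAdd.injective this
  have hsurj : Function.Surjective χ := by
    rintro ⟨h, hh⟩
    obtain ⟨b, hb⟩ : ∃ b : ℤ, (Multiplicative.ofAdd (2:ℤ)) ^ b = φ ((QuotientGroup.mk' N) h) := hh
    have hb' : φ ((QuotientGroup.mk' N) h) = Multiplicative.ofAdd (2*b) := by
      rw [← hb, ← ofAdd_zsmul, smul_eq_mul, mul_comm]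
    have hmem' : h * (g ^ (2*b))⁻¹ ∈ N := by
      rw [← QuotientGroup.eq_one_iff]
      show (QuotientGroup.mk' N) (h * (g ^ (2*b))⁻¹) = 1
      rw [map_mul, map_inv]
      apply φ.injective
      rw [map_mul, map_inv, hb', hpow, mul_inv_cancel, map_one]
    refine ⟨Multiplicative.ofAdd (Multiplicative.toAdd (ψ ⟨h * (g ^ (2*b))⁻¹, hmem'⟩), b), ?_⟩
    apply Subtype.ext
    show (ψ.symm (Multiplicative.ofAdd (Multiplicative.toAdd (ψ ⟨h * (g ^ (2*b))⁻¹, hmem'⟩))) : G)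
        * g ^ (2*b) = h
    rw [ofAdd_toAdd, MulEquiv.symm_apply_apply]
    show h * (g ^ (2*b))⁻¹ * g ^ (2*b) = h
    group
  exact ⟨H, ⟨by rw [hidx]; norm_num⟩, ⟨(MulEquiv.ofBijective χ ⟨hinj, hsurj⟩).symm⟩⟩
end

section
/- Let G be a group containing a finite normal subgroup F such that the quotient G/F is isomorphic to a subgroup of the infinite dihedral group D_∞. Then G is virtually cyclic. -/
open DihedralGroup Subgroup

private def sgn : DihedralGroup 0 →* Multiplicative (ZMod 2) where
  toFun x := match x with
    | .r _ => 1
    | .sr _ => Multiplicative.ofAdd 1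
  map_one' := rfl
  map_mul' := by
    rintro (i | i) (j | j) <;> simp [DihedralGroup.r_mul_r, DihedralGroup.r_mul_sr,
      DihedralGroup.sr_mul_r, DihedralGroup.sr_mul_sr] <;> decide

private lemma r_one_zpow (k : ℤ) :
    (DihedralGroup.r 1 : DihedralGroup 0) ^ k = DihedralGroup.r k := by
  induction k using Int.induction_on with
  | zero => rfl
  | succ n ih => rw [zpow_add_one, ih]; exact DihedralGroup.r_mul_r _ _
  | pred n ih =>
      rw [zpow_sub_one, ih]
      have : (DihedralGroup.r 1 : DihedralGroup 0)⁻¹ = DihedralGroup.r (-1) := rfl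
      rw [this]
      exact DihedralGroup.r_mul_r _ _

private lemma isCyclic_zpowers {G : Type*} [Group G] (g : G) :
    IsCyclic (Subgroup.zpowers g) := by
  refine ⟨⟨⟨g, Subgroup.mem_zpowers g⟩, fun x => ?_⟩⟩
  obtain ⟨n, hn⟩ := x.2
  exact ⟨n, Subtype.ext (by simpa using hn)⟩

private lemma aux {K A : Type*} [Group K] [Group A] (ψ : K →* A) [IsCyclic A]
    (hker : Finite ψ.ker) :
    ∃ C : Subgroup K, C.FiniteIndex ∧ IsCyclic C := by
  haveI : IsCyclic ψ.range := Subgroup.isCyclic _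
  obtain ⟨a, hgen⟩ := IsCyclic.exists_generator (α := ψ.range)
  obtain ⟨g, hg⟩ := a.2
  refine ⟨Subgroup.zpowers g, ?_, _root_.isCyclic_zpowers g⟩
  have hsurj : Function.Surjective
      (fun k : ψ.ker => (QuotientGroup.mk k.1 : K ⧸ Subgroup.zpowers g)) := by
    intro q
    induction q using QuotientGroup.induction_on with
    | H x =>
      obtain ⟨n, hn⟩ := hgen ⟨ψ x, ⟨x, rfl⟩⟩
      have hxn : ψ (g ^ n) = ψ x := by
        have := congrArg Subtype.val hn
        simpa [← hg] using this
      refine ⟨⟨x * (g ^ n)⁻¹, ?_⟩, ?_⟩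
      · simp [MonoidHom.mem_ker, hxn]
      · refine (QuotientGroup.eq).mpr ?_
        have hcalc : (x * (g ^ n)⁻¹)⁻¹ * x = g ^ n := by group
        rw [hcalc]
        exact ⟨n, rfl⟩
  haveI : Finite (K ⧸ Subgroup.zpowers g) := Finite.of_surjective _ hsurj
  exact Subgroup.finiteIndex_of_finite_quotient

/-- If a group `G` contains a finite normal subgroup `F` such that the
quotient `G/F` is isomorphic to a subgroup of the infinite dihedral group `D_∞`, then
`G` is virtually cyclic, i.e. `G` contains a finite-index cyclic subgroup. -/
theorem stmt12 {G : Type*} [Group G] (F : Subgroup G) [F.Normal] (hF : Finite F)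
    (f : G ⧸ F →* DihedralGroup 0) (hf : Function.Injective f) :
    ∃ H : Subgroup G, H.FiniteIndex ∧ IsCyclic H := by
  set φ : G →* DihedralGroup 0 := f.comp (QuotientGroup.mk' F) with hφ
  set H : Subgroup G := (sgn.comp φ).ker with hH
  haveI hHfi : H.FiniteIndex := Subgroup.finiteIndex_ker _
  -- every element of H maps into the rotation subgroup
  have hrot : ∀ x : H, φ x.1 ∈ Subgroup.zpowers (DihedralGroup.r (1 : ZMod 0)) := by
    rintro ⟨x, hx⟩
    have hx' : sgn (φ x) = 1 := hx
    rcases h : φ x with i | i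
    · exact ⟨i, _root_.r_one_zpow i⟩
    · rw [h] at hx'
      have heq : sgn (DihedralGroup.sr i) = Multiplicative.ofAdd 1 := rfl
      rw [heq] at hx'
      exact absurd hx' (by decide)
  set ψ : H →* Subgroup.zpowers (DihedralGroup.r (1 : ZMod 0)) :=
    (φ.comp H.subtype).codRestrict _ hrot with hψ
  haveI : IsCyclic (Subgroup.zpowers (DihedralGroup.r (1 : ZMod 0))) :=
    _root_.isCyclic_zpowers _
  have hkerfin : Finite ψ.ker := by
    have hinj : Function.Injective (fun k : ψ.ker => (⟨k.1.1, by
        have h1 : φ k.1.1 = 1 := by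
          have := k.2
          rw [MonoidHom.mem_ker] at this
          have := congrArg Subtype.val this
          exact this
        have : (QuotientGroup.mk' F) k.1.1 = 1 := hf (by simpa [hφ] using h1)
        simpa [QuotientGroup.eq_one_iff] using this⟩ : F)) := by
      intro a b hab
      have := congrArg Subtype.val hab
      exact Subtype.ext (Subtype.ext this)
    exact Finite.of_injective _ hinj
  obtain ⟨C, hCfi, hCcyc⟩ := aux ψ hkerfin
  refine ⟨C.map H.subtype, ⟨?_⟩, ?_⟩
  · rw [Subgroup.index_map_subtype]
    exact Nat.mul_ne_zero hCfi.index_ne_zero hHfi.index_ne_zero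
  · exact isCyclic_of_surjective _ (Subgroup.equivMapOfInjective C H.subtype
      H.subtype_injective).surjective
end

section
/- Let a group G act acylindrically by automorphisms on a tree T. Then for every geodesic line γ in T, the setwise stabilizer of γ in G is virtually cyclic. -/
open Pointwise

/-- An action of a group `Γ` by automorphisms on a graph `T` is *acylindrical* if there
is an integer `k` such that the pointwise stabilizer of every injective path of length
`k` in `T` is finite. -/
def IsAcylindricalAction (Γ : Type*) [Group Γ] {V : Type*} [MulAction Γ V]
    (T : SimpleGraph V) : Prop :=
  ∃ k : ℕ, ∀ p : Fin (k + 1) → V, Function.Injective p →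
    (∀ i : Fin k, T.Adj (p i.castSucc) (p i.succ)) →
    Set.Finite {g : Γ | ∀ i, g • p i = p i}

/-- A group is *virtually cyclic* if it contains a finite-index cyclic subgroup. -/
def IsVirtuallyCyclic (G : Type*) [Group G] : Prop :=
  ∃ H : Subgroup G, H.FiniteIndex ∧ IsCyclic H

private lemma walk_exists {V : Type*} {T : SimpleGraph V} :
    ∀ (a : ℕ) (η : ℕ → V), (∀ i : ℕ, T.Adj (η i) (η (i + 1))) →
      ∃ w : T.Walk (η 0) (η a), w.length = a ∧
        w.support = (List.range (a + 1)).map η := by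
  intro a
  induction a with
  | zero =>
      intro η _
      refine ⟨SimpleGraph.Walk.nil, by simp, ?_⟩
      simp [List.range_succ]
  | succ a ih =>
      intro η hadj
      obtain ⟨w, hl, hs⟩ := ih (fun i => η (i + 1)) (fun i => hadj (i + 1))
      refine ⟨SimpleGraph.Walk.cons (hadj 0) w, by simp [hl], ?_⟩
      have hmaps : (List.range (a + 1 + 1)).map η
          = η 0 :: (List.range (a + 1)).map (fun i => η (i + 1)) := by
        rw [List.range_succ_eq_map, List.map_cons, List.map_map]
        rfl
      rw [SimpleGraph.Walk.support_cons, hs, hmaps]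

private lemma tree_adj {V : Type*} {T : SimpleGraph V} (hT : T.IsAcyclic)
    {γ : ℤ → V} (hinj : Function.Injective γ)
    (hgeo : ∀ n : ℤ, T.Adj (γ n) (γ (n + 1))) :
    ∀ m n : ℤ, T.Adj (γ m) (γ n) → n = m + 1 ∨ m = n + 1 := by
  have key : ∀ m n : ℤ, m < n → T.Adj (γ m) (γ n) → n = m + 1 := by
    intro m n hmn hAdj
    set a := (n - m).toNat with ha
    have han : m + (a : ℤ) = n := by
      have : ((n - m).toNat : ℤ) = n - m := Int.toNat_of_nonneg (by omega)
      omega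
    obtain ⟨w, hl, hs⟩ := walk_exists a (fun i => γ (m + i))
      (fun i => by
        have h1 : (m + ((i + 1 : ℕ) : ℤ)) = (m + (i : ℤ)) + 1 := by push_cast; ring
        simp only [h1]
        exact hgeo _)
    have h0 : γ (m + ((0 : ℕ) : ℤ)) = γ m := by norm_num
    have hA : γ (m + (a : ℤ)) = γ n := by rw [han]
    set w' := w.copy h0 hA with hw'
    have hw'path : w'.IsPath := by
      apply SimpleGraph.Walk.IsPath.mk'
      rw [hw', SimpleGraph.Walk.support_copy, hs]
      refine List.Nodup.map ?_ List.nodup_range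
      intro i j hij
      have := hinj hij
      omega
    have hp2 : (SimpleGraph.Walk.cons hAdj SimpleGraph.Walk.nil).IsPath := by
      refine SimpleGraph.Walk.IsPath.mk' ?_
      simp only [SimpleGraph.Walk.support_cons, SimpleGraph.Walk.support_nil]
      simp only [List.nodup_cons, List.mem_singleton, List.not_mem_nil, not_false_iff,
        List.nodup_nil, and_true]
      intro h
      exact absurd (hinj h) (by omega)
    have huni := (SimpleGraph.isAcyclic_iff_path_unique.mp hT)
      (⟨w', hw'path⟩ : T.Path (γ m) (γ n)) ⟨_, hp2⟩
    have hlen : w'.length = 1 := by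
      have := congrArg (fun p : T.Path (γ m) (γ n) => p.1.length) huni
      simpa using this
    have : a = 1 := by
      rw [hw', SimpleGraph.Walk.length_copy, hl] at hlen
      exact hlen
    omega
  intro m n hAdj
  rcases lt_trichotomy m n with h | h | h
  · left; exact key m n h hAdj
  · exact absurd hAdj (by rw [h]; exact T.irrefl)
  · right; exact key n m h hAdj.symm

private lemma virtuallyCyclic_of_affine {G : Type*} [Group G]
    (ε c : G → ℤ)
    (hε1 : ε 1 = 1) (hc1 : c 1 = 0)
    (hεmul : ∀ s t : G, ε (s * t) = ε s * ε t)
    (hcmul : ∀ s t : G, c (s * t) = c s + ε s * c t)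
    (hεval : ∀ s : G, ε s = 1 ∨ ε s = -1)
    (K : Set G) (hKfin : K.Finite)
    (hker : ∀ s : G, ε s = 1 → c s = 0 → s ∈ K) :
    IsVirtuallyCyclic G := by
  classical
  have hεinv : ∀ s : G, ε s⁻¹ = ε s := by
    intro s
    have h1 : ε s⁻¹ * ε s = 1 := by rw [← hεmul, inv_mul_cancel, hε1]
    rcases hεval s with h | h <;> rcases hεval s⁻¹ with h' | h' <;>
      simp [h, h'] at h1 ⊢
  have hcinv : ∀ s : G, ε s = 1 → c s⁻¹ = -c s := by
    intro s hs
    have h1 : c (s⁻¹ * s) = c s⁻¹ + ε s⁻¹ * c s := hcmul _ _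
    rw [inv_mul_cancel, hc1, hεinv, hs] at h1
    omega
  set C : AddSubgroup ℤ :=
    { carrier := {d | ∃ s : G, ε s = 1 ∧ c s = d}
      zero_mem' := ⟨1, hε1, hc1⟩
      add_mem' := by
        rintro a b ⟨s, hs1, hs2⟩ ⟨t, ht1, ht2⟩
        exact ⟨s * t, by rw [hεmul, hs1, ht1]; ring,
          by rw [hcmul, hs1, hs2, ht2]; ring⟩
      neg_mem' := by
        rintro a ⟨s, hs1, hs2⟩
        exact ⟨s⁻¹, by rw [hεinv, hs1], by rw [hcinv s hs1, hs2]⟩ } with hC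
  obtain ⟨d, hd⟩ := Int.subgroup_cyclic C
  have hdC : d ∈ C := by
    rw [hd]
    exact AddSubgroup.mem_closure_singleton.mpr ⟨1, one_zsmul d⟩
  obtain ⟨g0, hg0ε, hg0c⟩ := hdC
  have hpow : ∀ m : ℤ, ε (g0 ^ m) = 1 ∧ c (g0 ^ m) = m * d := by
    intro m
    induction m using Int.induction_on with
    | zero => simp [hε1, hc1]
    | succ k ih =>
        rw [zpow_add_one]
        constructor
        · rw [hεmul, ih.1, hg0ε]; norm_num
        · rw [hcmul, ih.1, ih.2, hg0c]; ring
    | pred k ih =>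
        rw [zpow_sub_one]
        constructor
        · rw [hεmul, ih.1, hεinv, hg0ε]; norm_num
        · rw [hcmul, ih.1, ih.2, hcinv g0 hg0ε, hg0c]; ring
  have hcoset : ∀ s : G, ε s = 1 → ∃ x ∈ K, ∃ m : ℤ, s = x * g0 ^ m := by
    intro s hs
    have hcs : c s ∈ C := ⟨s, hs, rfl⟩
    rw [hd] at hcs
    obtain ⟨m, hm⟩ := AddSubgroup.mem_closure_singleton.mp hcs
    rw [zsmul_eq_mul] at hm
    refine ⟨s * (g0 ^ m)⁻¹, ?_, m, by group⟩
    apply hker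
    · rw [hεmul, hs, hεinv, (hpow m).1]; norm_num
    · rw [hcmul, hs, hcinv _ (hpow m).1, (hpow m).2]
      push_cast at hm
      linarith [hm]
  set r₀ : G := if h : ∃ r : G, ε r = -1 then h.choose else 1 with hr₀
  set F : Set G := K ∪ (fun y => r₀ * y) '' K with hF
  have hcover : ∀ s : G, ∃ x ∈ F, ∃ m : ℤ, s = x * g0 ^ m := by
    intro s
    rcases hεval s with hs | hs
    · obtain ⟨x, hx, m, hm⟩ := hcoset s hs
      exact ⟨x, Or.inl hx, m, hm⟩
    · have hex : ∃ r : G, ε r = -1 := ⟨s, hs⟩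
      have hrval : ε r₀ = -1 := by rw [hr₀, dif_pos hex]; exact hex.choose_spec
      have h1 : ε (r₀⁻¹ * s) = 1 := by
        rw [hεmul, hεinv, hrval, hs]; norm_num
      obtain ⟨x, hx, m, hm⟩ := hcoset _ h1
      refine ⟨r₀ * x, Or.inr ⟨x, hx, rfl⟩, m, ?_⟩
      have : s = r₀ * (r₀⁻¹ * s) := by group
      rw [this, hm, mul_assoc]
  have hFfin : F.Finite := hKfin.union (hKfin.image _)
  haveI : Finite ↥F := hFfin.to_subtype
  have hsurj : Function.Surjective
      (fun x : ↥F => (QuotientGroup.mk x.1 : G ⧸ Subgroup.zpowers g0)) := by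
    intro q
    refine QuotientGroup.induction_on q ?_
    intro s
    obtain ⟨x, hxF, m, hm⟩ := hcover s
    refine ⟨⟨x, hxF⟩, ?_⟩
    show (QuotientGroup.mk x : G ⧸ Subgroup.zpowers g0) = QuotientGroup.mk s
    rw [QuotientGroup.eq]
    rw [hm]
    simpa using Subgroup.zpow_mem_zpowers g0 m
  haveI hfinQ : Finite (G ⧸ Subgroup.zpowers g0) := Finite.of_surjective _ hsurj
  refine ⟨Subgroup.zpowers g0, Subgroup.finiteIndex_of_finite_quotient, ?_⟩
  refine ⟨⟨g0, Subgroup.mem_zpowers g0⟩, ?_⟩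
  rintro ⟨x, hx⟩
  obtain ⟨n, hn⟩ := Subgroup.mem_zpowers_iff.mp hx
  refine ⟨n, ?_⟩
  apply Subtype.ext
  simpa using hn

/-- Let a group `Γ` act acylindrically by automorphisms on a tree `T`
(a connected acyclic simple graph). Then for every geodesic line `γ : ℤ → V(T)` in `T`,
the setwise stabilizer of `γ` in `Γ` is virtually cyclic. -/
theorem stmt13 {V : Type*} (T : SimpleGraph V) (hconn : T.Connected) (hT : T.IsAcyclic)
    {Γ : Type*} [Group Γ] [MulAction Γ V]
    (hadj : ∀ (g : Γ) (u v : V), T.Adj u v → T.Adj (g • u) (g • v))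
    (hacyl : IsAcylindricalAction Γ T)
    (γ : ℤ → V) (hinj : Function.Injective γ)
    (hgeo : ∀ n : ℤ, T.Adj (γ n) (γ (n + 1))) :
    IsVirtuallyCyclic (MulAction.stabilizer Γ (Set.range γ)) := by
  classical
  obtain ⟨k, hk⟩ := hacyl
  set S := MulAction.stabilizer Γ (Set.range γ) with hSdef
  have hmemrange : ∀ g : Γ, g ∈ S → ∀ n : ℤ, ∃ m : ℤ, γ m = g • γ n := by
    intro g hg n
    have h1 : g • Set.range γ = Set.range γ := hg
    have h2 : g • γ n ∈ g • Set.range γ := Set.smul_mem_smul_set ⟨n, rfl⟩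
    rw [h1] at h2
    obtain ⟨m, hm⟩ := h2
    exact ⟨m, hm⟩
  have hex : ∀ (g : Γ) (n : ℤ), ∃ m : ℤ, g ∈ S → γ m = g • γ n := by
    intro g n
    by_cases hg : g ∈ S
    · obtain ⟨m, hm⟩ := hmemrange g hg n
      exact ⟨m, fun _ => hm⟩
    · exact ⟨0, fun h => absurd h hg⟩
  choose idx hidx using hex
  have huniq : ∀ g ∈ S, ∀ n m : ℤ, γ m = g • γ n → m = idx g n := by
    intro g hg n m h
    exact hinj (h.trans (hidx g n hg).symm)
  have hone : ∀ n : ℤ, idx 1 n = n := by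
    intro n
    exact (huniq 1 (one_mem S) n n (by rw [one_smul])).symm
  have hcomp : ∀ g ∈ S, ∀ h ∈ S, ∀ n, idx (g * h) n = idx g (idx h n) := by
    intro g hg h hh n
    refine (huniq (g * h) (mul_mem hg hh) n (idx g (idx h n)) ?_).symm
    rw [hidx g (idx h n) hg, hidx h n hh, mul_smul]
  have hinjidx : ∀ g ∈ S, Function.Injective (idx g) := by
    intro g hg a b hab
    have h1 : g • γ a = g • γ b := by
      rw [← hidx g a hg, ← hidx g b hg, hab]
    exact hinj (smul_left_cancel g h1)
  have hstep : ∀ g ∈ S, ∀ a b : ℤ, b = a + 1 →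
      idx g b = idx g a + 1 ∨ idx g b = idx g a - 1 := by
    intro g hg a b hb
    subst hb
    have hAdj : T.Adj (γ (idx g a)) (γ (idx g (a + 1))) := by
      rw [hidx g a hg, hidx g (a + 1) hg]
      exact hadj g _ _ (hgeo a)
    rcases tree_adj hT hinj hgeo _ _ hAdj with h | h
    · left; omega
    · right; omega
  have hadjstep : ∀ g ∈ S, ∀ a b c : ℤ, b = a + 1 → c = b + 1 →
      idx g c - idx g b = idx g b - idx g a := by
    intro g hg a b c hb hc
    rcases hstep g hg a b hb with h1 | h1 <;> rcases hstep g hg b c hc with h2 | h2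
    · omega
    · exfalso
      have : c = a := hinjidx g hg (by omega : idx g c = idx g a)
      omega
    · exfalso
      have : c = a := hinjidx g hg (by omega : idx g c = idx g a)
      omega
    · omega
  have hconst : ∀ g ∈ S, ∀ a b : ℤ, b = a + 1 →
      idx g b - idx g a = idx g 1 - idx g 0 := by
    intro g hg a
    induction a using Int.induction_on with
    | zero => intro b hb; subst hb; norm_num
    | succ k ih =>
        intro b hb; subst hb
        have h1 := hadjstep g hg (k : ℤ) ((k : ℤ) + 1) ((k : ℤ) + 1 + 1) rfl rfl
        have h2 := ih ((k : ℤ) + 1) rfl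
        omega
    | pred k ih =>
        intro b hb; subst hb
        have e : (-(k : ℤ) - 1 + 1) = -(k : ℤ) := by ring
        rw [e]
        have h1 := hadjstep g hg (-(k : ℤ) - 1) (-(k : ℤ)) (-(k : ℤ) + 1)
          (by ring) (by ring)
        have h2 := ih (-(k : ℤ) + 1) rfl
        omega
  have hformula : ∀ g ∈ S, ∀ n : ℤ,
      idx g n = idx g 0 + (idx g 1 - idx g 0) * n := by
    intro g hg n
    induction n using Int.induction_on with
    | zero => ring
    | succ k ih =>
        have h1 := hconst g hg (k : ℤ) ((k : ℤ) + 1) rfl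
        push_cast
        linear_combination ih + h1
    | pred k ih =>
        have h1 := hconst g hg (-(k : ℤ) - 1) (-(k : ℤ)) (by ring)
        push_cast
        linear_combination ih - h1
  have hepsilon : ∀ g ∈ S, idx g 1 - idx g 0 = 1 ∨ idx g 1 - idx g 0 = -1 := by
    intro g hg
    rcases hstep g hg 0 1 (by ring) with h | h
    · left; omega
    · right; omega
  -- instantiate the abstract lemma
  set ε : ↥S → ℤ := fun s => idx (s : Γ) 1 - idx (s : Γ) 0 with hεdef
  set c : ↥S → ℤ := fun s => idx (s : Γ) 0 with hcdef
  have hcoe_mul : ∀ s t : ↥S, ((s * t : ↥S) : Γ) = (s : Γ) * (t : Γ) := fun s t => rfl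
  have hcoe_one : ((1 : ↥S) : Γ) = 1 := rfl
  have hidxmul : ∀ s t : ↥S, ∀ n : ℤ,
      idx ((s * t : ↥S) : Γ) n = idx (s : Γ) (idx (t : Γ) n) := by
    intro s t n
    rw [hcoe_mul]
    exact hcomp _ s.2 _ t.2 n
  have hεmul : ∀ s t : ↥S, ε (s * t) = ε s * ε t := by
    intro s t
    show idx ((s * t : ↥S) : Γ) 1 - idx ((s * t : ↥S) : Γ) 0 = _
    rw [hidxmul, hidxmul,
      hformula (s : Γ) s.2 (idx (t : Γ) 1), hformula (s : Γ) s.2 (idx (t : Γ) 0)]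
    show _ = (idx (s : Γ) 1 - idx (s : Γ) 0) * (idx (t : Γ) 1 - idx (t : Γ) 0)
    ring
  have hcmul : ∀ s t : ↥S, c (s * t) = c s + ε s * c t := by
    intro s t
    show idx ((s * t : ↥S) : Γ) 0 = _
    rw [hidxmul, hformula (s : Γ) s.2 (idx (t : Γ) 0)]
  have hε1 : ε (1 : ↥S) = 1 := by
    show idx ((1 : ↥S) : Γ) 1 - idx ((1 : ↥S) : Γ) 0 = 1
    rw [hcoe_one]
    simp only [hone]
    norm_num
  have hc1 : c (1 : ↥S) = 0 := by
    show idx ((1 : ↥S) : Γ) 0 = 0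
    rw [hcoe_one]
    simp only [hone]
  have hεval : ∀ s : ↥S, ε s = 1 ∨ ε s = -1 := fun s => hepsilon (s : Γ) s.2
  -- the finite kernel
  set K : Set ↥S := {s : ↥S | ∀ n : ℤ, (s : Γ) • γ n = γ n} with hKdef
  have hKfin : K.Finite := by
    set p : Fin (k + 1) → V := fun i => γ ((i : ℕ) : ℤ) with hpdef
    have hpinj : Function.Injective p := by
      intro i j hij
      have h1 : ((i : ℕ) : ℤ) = ((j : ℕ) : ℤ) := hinj hij
      have : (i : ℕ) = (j : ℕ) := by omega
      exact Fin.ext this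
    have hpadj : ∀ i : Fin k, T.Adj (p i.castSucc) (p i.succ) := by
      intro i
      show T.Adj (γ ((i.castSucc : ℕ) : ℤ)) (γ ((i.succ : ℕ) : ℤ))
      have h1 : ((i.castSucc : ℕ) : ℤ) = ((i : ℕ) : ℤ) := by
        simp [Fin.coe_castSucc]
      have h2 : ((i.succ : ℕ) : ℤ) = ((i : ℕ) : ℤ) + 1 := by
        simp [Fin.val_succ]
      rw [h1, h2]
      exact hgeo _
    have hfin0 := hk p hpinj hpadj
    have hsub : K ⊆ Subtype.val ⁻¹' {g : Γ | ∀ i, g • p i = p i} := by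
      intro s hs i
      exact hs ((i : ℕ) : ℤ)
    exact (hfin0.preimage Subtype.coe_injective.injOn).subset hsub
  have hker : ∀ s : ↥S, ε s = 1 → c s = 0 → s ∈ K := by
    intro s hs1 hs2 n
    have hε' : idx (s : Γ) 1 - idx (s : Γ) 0 = 1 := hs1
    have hc' : idx (s : Γ) 0 = 0 := hs2
    have h1 : idx (s : Γ) n = n := by
      rw [hformula (s : Γ) s.2 n, hε', hc']; ring
    have h2 : γ (idx (s : Γ) n) = (s : Γ) • γ n := hidx (s : Γ) n s.2
    rw [h1] at h2
    exact h2.symm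
  exact virtuallyCyclic_of_affine ε c hε1 hc1 hεmul hcmul hεval K hKfin hker
end
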